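/- For nonnegative integers n ≥ 1, r, s, m, the integral over the unit cube [0,1]^n of ∏_{i=1}^n x_i^r (1-x_i)^s · ∏_{1≤i<j≤n} |x_i - x_j|^m with respect to dx_1⋯dx_n equals n! · |SP(n,r,s,m)| / ((r+s+1)n + m·n(n-1)/2)!, where SP(n,r,s,m) is the set of Selberg permutations. -/

import Mathlib

open MeasureTheory Finset

/-- The type of letters of `A(n,r,s,m)`: the letters `x i`, `a (i,j) k`, `b i k`, `c i k`. -/
def SelbergLetter (n r s m : ℕ) : Type :=
  Fin n ⊕ ({p : Fin n × Fin n // p.1 < p.2} × Fin m) ⊕ (Fin n × Fin r) ⊕ (Fin n × Fin s)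

/-- A permutation of the letters, encoded by the position `w l` of each letter `l`,
is a Selberg permutation if the `x i` appear in order, each `a (i,j) k` lies between
`x i` and `x j`, each `b i k` lies before `x i` and each `c i k` lies after `x i`. -/
def IsSelbergPerm {n r s m : ℕ}
    (w : SelbergLetter n r s m → Fin ((r + s + 1) * n + m * (n * (n - 1) / 2))) : Prop :=
  Function.Bijective w ∧
  (∀ i j : Fin n, i < j → w (Sum.inl i) < w (Sum.inl j)) ∧
  (∀ (p : {p : Fin n × Fin n // p.1 < p.2}) (k : Fin m),
    w (Sum.inl p.1.1) < w (Sum.inr (Sum.inl (p, k))) ∧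
    w (Sum.inr (Sum.inl (p, k))) < w (Sum.inl p.1.2)) ∧
  (∀ (i : Fin n) (k : Fin r), w (Sum.inr (Sum.inr (Sum.inl (i, k)))) < w (Sum.inl i)) ∧
  (∀ (i : Fin n) (k : Fin s), w (Sum.inl i) < w (Sum.inr (Sum.inr (Sum.inr (i, k)))))

/-- `|SP(n,r,s,m)|`, the number of Selberg permutations. -/
noncomputable def SPnum (n r s m : ℕ) : ℕ :=
  Nat.card {w : SelbergLetter n r s m → Fin ((r + s + 1) * n + m * (n * (n - 1) / 2)) //
    IsSelbergPerm w}

open MeasureTheory Finset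
open scoped ENNReal

namespace SelbergAux

lemma volume_eq_coords {ι : Type*} [Fintype ι] {l l' : ι} (h : l ≠ l') :
    volume {t : ι → ℝ | t l = t l'} = 0 := by
  classical
  have hl' : ¬ (l' = l) := fun e => h e.symm
  set E := MeasurableEquiv.piEquivPiSubtypeProd (fun _ : ι => ℝ) (fun i => i = l) with hE
  have hmp := volume_preserving_piEquivPiSubtypeProd (fun _ : ι => ℝ) (fun i => i = l)
  set T : Set ((∀ _ : {x : ι // x = l}, ℝ) × (∀ _ : {x : ι // ¬ x = l}, ℝ)) :=
    {q | q.1 ⟨l, rfl⟩ = q.2 ⟨l', hl'⟩} with hT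
  have hTm : MeasurableSet T :=
    measurableSet_eq_fun (by fun_prop) (by fun_prop)
  have hpre : {t : ι → ℝ | t l = t l'} = E ⁻¹' T := rfl
  rw [hpre, hmp.measure_preimage hTm.nullMeasurableSet, Measure.volume_eq_prod,
    Measure.prod_apply hTm]
  have h0 : ∀ a : (∀ _ : {x : ι // x = l}, ℝ),
      (volume : Measure (∀ _ : {x : ι // ¬ x = l}, ℝ)) (Prod.mk a ⁻¹' T) = 0 := by
    intro a
    have : Prod.mk a ⁻¹' T = {b : ∀ _ : {x : ι // ¬ x = l}, ℝ | b ⟨l', hl'⟩ = a ⟨l, rfl⟩} := by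
      ext b; simp [hT, eq_comm]
    rw [this, volume_pi, Measure.pi_hyperplane]
  simp [h0]

lemma measurableSet_region {ι : Type*} [Fintype ι] {N : ℕ} (w : ι → Fin N) :
    MeasurableSet {t : ι → ℝ | (∀ l, t l ∈ Set.Icc (0:ℝ) 1) ∧ ∀ l l', w l < w l' → t l < t l'} := by
  have h1 : MeasurableSet {t : ι → ℝ | ∀ l, t l ∈ Set.Icc (0:ℝ) 1} := by
    rw [Set.setOf_forall]
    exact MeasurableSet.iInter fun l => (measurable_pi_apply l) measurableSet_Icc
  have h2 : MeasurableSet {t : ι → ℝ | ∀ l l', w l < w l' → t l < t l'} := by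
    rw [Set.setOf_forall]
    refine MeasurableSet.iInter fun l => ?_
    rw [Set.setOf_forall]
    refine MeasurableSet.iInter fun l' => ?_
    rw [Set.setOf_forall]
    exact MeasurableSet.iInter fun _ =>
      measurableSet_lt (measurable_pi_apply l) (measurable_pi_apply l')
  exact h1.inter h2

lemma volume_cube {ι : Type*} [Fintype ι] :
    volume {t : ι → ℝ | ∀ l, t l ∈ Set.Icc (0:ℝ) 1} = 1 := by
  have : {t : ι → ℝ | ∀ l, t l ∈ Set.Icc (0:ℝ) 1}
      = Set.univ.pi (fun _ : ι => Set.Icc (0:ℝ) 1) := by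
    ext t; simp only [Set.mem_setOf_eq, Set.mem_pi, Set.mem_univ, true_implies]
  rw [this, volume_pi_pi]
  simp

lemma volume_strictMono_cube (N : ℕ) :
    volume {u : Fin N → ℝ | (∀ i, u i ∈ Set.Icc (0:ℝ) 1) ∧ StrictMono u}
      = ((N.factorial : ℝ≥0∞))⁻¹ := by
  classical
  set T : Equiv.Perm (Fin N) → Set (Fin N → ℝ) := fun σ =>
    {u | (∀ l, u l ∈ Set.Icc (0:ℝ) 1) ∧ ∀ l l', σ l < σ l' → u l < u l'} with hTdef
  have hTm : ∀ σ, MeasurableSet (T σ) := fun σ => measurableSet_region σ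
  -- each T σ has the same volume as T 1
  have hvol : ∀ σ : Equiv.Perm (Fin N), volume (T σ) = volume (T 1) := by
    intro σ
    have hmp := volume_measurePreserving_piCongrLeft (fun _ : Fin N => ℝ) (σ : Fin N ≃ Fin N)
    set F := MeasurableEquiv.piCongrLeft (fun _ : Fin N => ℝ) (σ : Fin N ≃ Fin N) with hF
    have hFa : ∀ (u : Fin N → ℝ) (b : Fin N), F u b = u (σ.symm b) := by
      intro u b
      have := MeasurableEquiv.piCongrLeft_apply_apply (σ : Fin N ≃ Fin N)
        (β := fun _ : Fin N => ℝ) u (σ.symm b)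
      simpa using this
    have hset : T σ = F ⁻¹' (T 1) := by
      ext u
      simp only [Set.mem_preimage, hTdef, Set.mem_setOf_eq]
      constructor
      · rintro ⟨hc, hs⟩
        refine ⟨fun i => by rw [hFa]; exact hc _, fun l l' hll => ?_⟩
        rw [hFa, hFa]
        exact hs _ _ (by simpa using hll)
      · rintro ⟨hc, hs⟩
        constructor
        · intro l
          have := hc (σ l)
          rwa [hFa, Equiv.symm_apply_apply] at this
        · intro l l' hll
          have := hs (σ l) (σ l') (by simpa using hll)
          rwa [hFa, hFa, Equiv.symm_apply_apply, Equiv.symm_apply_apply] at this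
    rw [hset, hmp.measure_preimage (hTm 1).nullMeasurableSet]
  -- the regions are pairwise disjoint
  have hdisj : Pairwise (Function.onFun Disjoint T) := by
    intro σ τ hst
    rw [Function.onFun, Set.disjoint_left]
    rintro u ⟨hc, hs⟩ ⟨hc', hs'⟩
    apply hst
    have hsm : StrictMono (u ∘ (σ.symm : Fin N → Fin N)) := by
      intro a b hab
      exact hs _ _ (by simpa using hab)
    have hsm' : StrictMono (u ∘ (τ.symm : Fin N → Fin N)) := by
      intro a b hab
      exact hs' _ _ (by simpa using hab)
    have hrange : Set.range (u ∘ (σ.symm : Fin N → Fin N))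
        = Set.range (u ∘ (τ.symm : Fin N → Fin N)) := by
      rw [Set.range_comp, Set.range_comp, Equiv.range_eq_univ, Equiv.range_eq_univ]
    haveI : WellFoundedLT (Fin N) := inferInstance
    have hcomp := (StrictMono.range_inj hsm hsm').1 hrange
    have huinj : Function.Injective u := by
      have hinj : Function.Injective (u ∘ (σ.symm : Fin N → Fin N)) := hsm.injective
      intro a b hab
      have := hinj (show (u ∘ (σ.symm : Fin N → Fin N)) (σ a) = (u ∘ (σ.symm : Fin N → Fin N)) (σ b) by
        simpa using hab)
      simpa using this
    refine Equiv.ext fun i => ?_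
    have h1 := congrFun hcomp (σ i)
    simp only [Function.comp_apply, Equiv.symm_apply_apply] at h1
    have h2 := huinj h1
    simpa using (congrArg τ h2).symm
  -- covering up to the null set of ties
  set Bad : Set (Fin N → ℝ) := ⋃ (l : Fin N) (l' : Fin N) (_ : l ≠ l'), {u | u l = u l'} with hBad
  have hBad0 : volume Bad = 0 :=
    measure_iUnion_null fun l => measure_iUnion_null fun l' => measure_iUnion_null
      fun h => volume_eq_coords h
  have hcover : {u : Fin N → ℝ | ∀ l, u l ∈ Set.Icc (0:ℝ) 1} ⊆ (⋃ σ, T σ) ∪ Bad := by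
    intro u hu
    by_cases hb : u ∈ Bad
    · exact Or.inr hb
    · left
      have huinj : Function.Injective u := by
        intro a b hab
        by_contra hne
        exact hb (Set.mem_iUnion.2 ⟨a, Set.mem_iUnion.2 ⟨b, Set.mem_iUnion.2 ⟨hne, hab⟩⟩⟩)
      have hsm : StrictMono (u ∘ (Tuple.sort u : Equiv.Perm (Fin N))) :=
        (Tuple.monotone_sort u).strictMono_of_injective (huinj.comp (Equiv.injective _))
      refine Set.mem_iUnion.2 ⟨(Tuple.sort u)⁻¹, hu, ?_⟩
      intro l l' hll
      have := hsm hll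
      simpa using this
  have hsum : volume (⋃ σ, T σ) = (N.factorial : ℝ≥0∞) * volume (T 1) := by
    rw [measure_iUnion hdisj hTm, tsum_fintype]
    simp_rw [hvol]
    rw [Finset.sum_const, Finset.card_univ, Fintype.card_perm, Fintype.card_fin, nsmul_eq_mul]
  have hone : volume (⋃ σ, T σ) = 1 := by
    apply le_antisymm
    · calc volume (⋃ σ, T σ) ≤ volume {u : Fin N → ℝ | ∀ l, u l ∈ Set.Icc (0:ℝ) 1} := by
            refine measure_mono ?_
            rintro u hu
            obtain ⟨σ, hσ⟩ := Set.mem_iUnion.1 hu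
            exact hσ.1
        _ = 1 := volume_cube
    · calc (1:ℝ≥0∞) = volume {u : Fin N → ℝ | ∀ l, u l ∈ Set.Icc (0:ℝ) 1} := volume_cube.symm
        _ ≤ volume ((⋃ σ, T σ) ∪ Bad) := measure_mono hcover
        _ ≤ volume (⋃ σ, T σ) + volume Bad := measure_union_le _ _
        _ = volume (⋃ σ, T σ) := by rw [hBad0, add_zero]
  have hN0 : (N.factorial : ℝ≥0∞) ≠ 0 := Nat.cast_ne_zero.2 (Nat.factorial_ne_zero N)
  have hNt : (N.factorial : ℝ≥0∞) ≠ ⊤ := ENNReal.natCast_ne_top _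
  have hT1 : volume (T 1) = (N.factorial : ℝ≥0∞)⁻¹ := by
    have h := hone; rw [hsum] at h
    calc volume (T 1) = (N.factorial : ℝ≥0∞)⁻¹ * ((N.factorial : ℝ≥0∞) * volume (T 1)) := by
          rw [← mul_assoc, ENNReal.inv_mul_cancel hN0 hNt, one_mul]
      _ = (N.factorial : ℝ≥0∞)⁻¹ := by rw [h, mul_one]
  have hTset : {u : Fin N → ℝ | (∀ i, u i ∈ Set.Icc (0:ℝ) 1) ∧ StrictMono u} = T 1 := by
    ext u
    simp only [hTdef, Set.mem_setOf_eq, Equiv.Perm.coe_one, id_eq, and_congr_right_iff]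
    intro _
    constructor
    · intro h l l' hll; exact h hll
    · intro h a b hab; exact h a b hab
  rw [hTset, hT1]

lemma volume_region {ι : Type*} [Fintype ι] {N : ℕ} (e : ι ≃ Fin N) :
    volume {t : ι → ℝ | (∀ l, t l ∈ Set.Icc (0:ℝ) 1) ∧ ∀ l l', e l < e l' → t l < t l'}
      = (N.factorial : ℝ≥0∞)⁻¹ := by
  have hmp := volume_measurePreserving_piCongrLeft (fun _ : Fin N => ℝ) e
  set F := MeasurableEquiv.piCongrLeft (fun _ : Fin N => ℝ) e with hF
  have hFa : ∀ (t : ι → ℝ) (b : Fin N), F t b = t (e.symm b) := by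
    intro t b
    have := MeasurableEquiv.piCongrLeft_apply_apply e (β := fun _ : Fin N => ℝ) t (e.symm b)
    simpa using this
  have hSm : MeasurableSet {u : Fin N → ℝ | (∀ i, u i ∈ Set.Icc (0:ℝ) 1) ∧ StrictMono u} := by
    have hseteq : {u : Fin N → ℝ | (∀ i, u i ∈ Set.Icc (0:ℝ) 1) ∧ StrictMono u}
        = {t : Fin N → ℝ | (∀ l, t l ∈ Set.Icc (0:ℝ) 1) ∧
            ∀ l l', (fun i : Fin N => i) l < (fun i : Fin N => i) l' → t l < t l'} := by
      ext u
      simp only [Set.mem_setOf_eq, and_congr_right_iff]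
      intro _
      exact ⟨fun h l l' hll => h hll, fun h a b hab => h a b hab⟩
    rw [hseteq]
    exact measurableSet_region (fun i : Fin N => i)
  have hset : {t : ι → ℝ | (∀ l, t l ∈ Set.Icc (0:ℝ) 1) ∧ ∀ l l', e l < e l' → t l < t l'}
      = F ⁻¹' {u : Fin N → ℝ | (∀ i, u i ∈ Set.Icc (0:ℝ) 1) ∧ StrictMono u} := by
    ext t
    simp only [Set.mem_preimage, Set.mem_setOf_eq]
    constructor
    · rintro ⟨hc, hs⟩
      refine ⟨fun i => by rw [hFa]; exact hc _, fun a b hab => ?_⟩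
      rw [hFa, hFa]
      exact hs _ _ (by simpa using hab)
    · rintro ⟨hc, hs⟩
      constructor
      · intro l
        have := hc (e l)
        rwa [hFa, Equiv.symm_apply_apply] at this
      · intro l l' hll
        have := hs (a := e l) (b := e l') hll
        rwa [hFa, hFa, Equiv.symm_apply_apply, Equiv.symm_apply_apply] at this
  rw [hset, hmp.measure_preimage hSm.nullMeasurableSet, volume_strictMono_cube]

end SelbergAux
namespace SelbergComb

abbrev SPairs (n : ℕ) := {p : Fin n × Fin n // p.1 < p.2}
abbrev SRest (n r s m : ℕ) := (SPairs n × Fin m) ⊕ (Fin n × Fin r) ⊕ (Fin n × Fin s)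
abbrev SLetter (n r s m : ℕ) := Fin n ⊕ SRest n r s m
abbrev SN (n r s m : ℕ) := (r + s + 1) * n + m * (n * (n - 1) / 2)

def sPairsEquiv (n : ℕ) : SPairs n ≃ (Σ j : Fin n, Fin j.val) where
  toFun p := ⟨p.1.2, ⟨p.1.1.val, p.2⟩⟩
  invFun q := ⟨(⟨q.2.val, lt_trans q.2.isLt q.1.isLt⟩, q.1), q.2.isLt⟩
  left_inv p := rfl
  right_inv q := rfl

lemma card_sPairs (n : ℕ) : Fintype.card (SPairs n) = n * (n - 1) / 2 := by
  rw [Fintype.card_congr (sPairsEquiv n), Fintype.card_sigma]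
  simp only [Fintype.card_fin]
  rw [Fin.sum_univ_eq_sum_range (fun i => i) n, Finset.sum_range_id]

lemma card_sLetter (n r s m : ℕ) : Fintype.card (SLetter n r s m) = SN n r s m := by
  simp only [SLetter, SRest, SN, Fintype.card_sum, Fintype.card_prod, card_sPairs,
    Fintype.card_fin]
  ring

/-- weak Selberg permutations: `x`'s in any order, each `a` between its two `x`'s
in either order. -/
def IsWeak {n r s m : ℕ} (w : SLetter n r s m → Fin (SN n r s m)) : Prop :=
  Function.Bijective w ∧
  (∀ (p : SPairs n) (k : Fin m),
    (w (Sum.inl p.1.1) < w (Sum.inr (Sum.inl (p, k))) ∧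
      w (Sum.inr (Sum.inl (p, k))) < w (Sum.inl p.1.2)) ∨
    (w (Sum.inl p.1.2) < w (Sum.inr (Sum.inl (p, k))) ∧
      w (Sum.inr (Sum.inl (p, k))) < w (Sum.inl p.1.1))) ∧
  (∀ (i : Fin n) (k : Fin r), w (Sum.inr (Sum.inr (Sum.inl (i, k)))) < w (Sum.inl i)) ∧
  (∀ (i : Fin n) (k : Fin s), w (Sum.inl i) < w (Sum.inr (Sum.inr (Sum.inr (i, k)))))

def pairMap {n : ℕ} (σ : Equiv.Perm (Fin n)) (p : SPairs n) : SPairs n :=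
  if h : σ p.1.1 < σ p.1.2 then ⟨(σ p.1.1, σ p.1.2), h⟩
  else ⟨(σ p.1.2, σ p.1.1),
    lt_of_le_of_ne (not_lt.mp h) (fun e => (ne_of_lt p.2) (σ.injective e).symm)⟩

lemma pairMap_symm_comp {n : ℕ} (σ : Equiv.Perm (Fin n)) (p : SPairs n) :
    pairMap σ.symm (pairMap σ p) = p := by
  obtain ⟨⟨i, j⟩, hij⟩ := p
  by_cases h : σ i < σ j <;>
    simp [pairMap, h, hij, lt_asymm hij]

def letterEquiv (n r s m : ℕ) (σ : Equiv.Perm (Fin n)) :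
    SLetter n r s m ≃ SLetter n r s m where
  toFun l := match l with
    | Sum.inl i => Sum.inl (σ i)
    | Sum.inr (Sum.inl (p, k)) => Sum.inr (Sum.inl (pairMap σ p, k))
    | Sum.inr (Sum.inr (Sum.inl (i, k))) => Sum.inr (Sum.inr (Sum.inl (σ i, k)))
    | Sum.inr (Sum.inr (Sum.inr (i, k))) => Sum.inr (Sum.inr (Sum.inr (σ i, k)))
  invFun l := match l with
    | Sum.inl i => Sum.inl (σ.symm i)
    | Sum.inr (Sum.inl (p, k)) => Sum.inr (Sum.inl (pairMap σ.symm p, k))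
    | Sum.inr (Sum.inr (Sum.inl (i, k))) => Sum.inr (Sum.inr (Sum.inl (σ.symm i, k)))
    | Sum.inr (Sum.inr (Sum.inr (i, k))) => Sum.inr (Sum.inr (Sum.inr (σ.symm i, k)))
  left_inv l := by
    rcases l with i | pk | ik | ik
    · simp
    · obtain ⟨p, k⟩ := pk; simp [pairMap_symm_comp]
    · obtain ⟨i, k⟩ := ik; simp
    · obtain ⟨i, k⟩ := ik; simp
  right_inv l := by
    rcases l with i | pk | ik | ik
    · simp
    · obtain ⟨p, k⟩ := pk
      have := pairMap_symm_comp σ.symm p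
      simp only [Equiv.symm_symm] at this
      simp [this]
    · obtain ⟨i, k⟩ := ik; simp
    · obtain ⟨i, k⟩ := ik; simp

end SelbergComb

namespace SelbergComb

lemma letterEquiv_inl {n r s m : ℕ} (σ : Equiv.Perm (Fin n)) (i : Fin n) :
    letterEquiv n r s m σ (Sum.inl i) = Sum.inl (σ i) := rfl
lemma letterEquiv_a {n r s m : ℕ} (σ : Equiv.Perm (Fin n)) (p : SPairs n) (k : Fin m) :
    letterEquiv n r s m σ (Sum.inr (Sum.inl (p, k))) = Sum.inr (Sum.inl (pairMap σ p, k)) := rfl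
lemma letterEquiv_b {n r s m : ℕ} (σ : Equiv.Perm (Fin n)) (i : Fin n) (k : Fin r) :
    letterEquiv n r s m σ (Sum.inr (Sum.inr (Sum.inl (i, k))))
      = Sum.inr (Sum.inr (Sum.inl (σ i, k))) := rfl
lemma letterEquiv_c {n r s m : ℕ} (σ : Equiv.Perm (Fin n)) (i : Fin n) (k : Fin s) :
    letterEquiv n r s m σ (Sum.inr (Sum.inr (Sum.inr (i, k))))
      = Sum.inr (Sum.inr (Sum.inr (σ i, k))) := rfl
lemma letterEquiv_symm_inl {n r s m : ℕ} (σ : Equiv.Perm (Fin n)) (i : Fin n) :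
    (letterEquiv n r s m σ).symm (Sum.inl i) = Sum.inl (σ.symm i) := rfl
lemma letterEquiv_symm_a {n r s m : ℕ} (σ : Equiv.Perm (Fin n)) (p : SPairs n) (k : Fin m) :
    (letterEquiv n r s m σ).symm (Sum.inr (Sum.inl (p, k)))
      = Sum.inr (Sum.inl (pairMap σ.symm p, k)) := rfl
lemma letterEquiv_symm_b {n r s m : ℕ} (σ : Equiv.Perm (Fin n)) (i : Fin n) (k : Fin r) :
    (letterEquiv n r s m σ).symm (Sum.inr (Sum.inr (Sum.inl (i, k))))
      = Sum.inr (Sum.inr (Sum.inl (σ.symm i, k))) := rfl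
lemma letterEquiv_symm_c {n r s m : ℕ} (σ : Equiv.Perm (Fin n)) (i : Fin n) (k : Fin s) :
    (letterEquiv n r s m σ).symm (Sum.inr (Sum.inr (Sum.inr (i, k))))
      = Sum.inr (Sum.inr (Sum.inr (σ.symm i, k))) := rfl

lemma isWeak_comp {n r s m : ℕ} (σ : Equiv.Perm (Fin n))
    {v : SLetter n r s m → Fin (SN n r s m)} (hv : IsSelbergPerm v) :
    IsWeak (v ∘ (letterEquiv n r s m σ).symm) := by
  obtain ⟨hbij, hx, ha, hb, hc⟩ := hv
  refine ⟨hbij.comp (letterEquiv n r s m σ).symm.bijective, ?_, ?_, ?_⟩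
  · intro p k
    simp only [Function.comp_apply, letterEquiv_symm_inl, letterEquiv_symm_a]
    by_cases h : σ.symm p.1.1 < σ.symm p.1.2
    · have hq : pairMap σ.symm p = ⟨(σ.symm p.1.1, σ.symm p.1.2), h⟩ := by
        simp [pairMap, h]
      rw [hq]
      exact Or.inl (ha ⟨(σ.symm p.1.1, σ.symm p.1.2), h⟩ k)
    · have h2 : σ.symm p.1.2 < σ.symm p.1.1 := lt_of_le_of_ne (not_lt.mp h)
        (fun e => (ne_of_lt p.2) ((σ.symm.injective e).symm))
      have hq : pairMap σ.symm p = ⟨(σ.symm p.1.2, σ.symm p.1.1), h2⟩ := by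
        simp [pairMap, h]
      rw [hq]
      exact Or.inr (ha ⟨(σ.symm p.1.2, σ.symm p.1.1), h2⟩ k)
  · intro i k
    simp only [Function.comp_apply, letterEquiv_symm_inl, letterEquiv_symm_b]
    exact hb (σ.symm i) k
  · intro i k
    simp only [Function.comp_apply, letterEquiv_symm_inl, letterEquiv_symm_c]
    exact hc (σ.symm i) k

lemma card_weak (n r s m : ℕ) :
    Nat.card {w : SLetter n r s m → Fin (SN n r s m) // IsWeak w}
      = n.factorial * SPnum n r s m := by
  classical
  haveI : WellFoundedLT (Fin (SN n r s m)) := inferInstance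
  set F : Equiv.Perm (Fin n) ×
      {v : SLetter n r s m → Fin (SN n r s m) // IsSelbergPerm v} →
      {w : SLetter n r s m → Fin (SN n r s m) // IsWeak w} :=
    fun σv => ⟨σv.2.1 ∘ (letterEquiv n r s m σv.1).symm, isWeak_comp σv.1 σv.2.2⟩ with hF
  have hinj : Function.Injective F := by
    rintro ⟨σ, v, hv⟩ ⟨σ', v', hv'⟩ h
    have heq : v ∘ (letterEquiv n r s m σ).symm = v' ∘ (letterEquiv n r s m σ').symm :=
      congrArg Subtype.val h
    set g : Fin n → Fin (SN n r s m) := fun i => v ((letterEquiv n r s m σ).symm (Sum.inl i))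
      with hg
    have hgσ : g ∘ (σ : Fin n → Fin n) = fun i => v (Sum.inl i) := by
      funext i
      simp [hg, letterEquiv_symm_inl]
    have hgσ' : g ∘ (σ' : Fin n → Fin n) = fun i => v' (Sum.inl i) := by
      funext i
      have := congrFun heq (Sum.inl (σ' i))
      simp only [Function.comp_apply, letterEquiv_symm_inl, Equiv.symm_apply_apply] at this
      simp [hg, letterEquiv_symm_inl, this]
    have hsm1 : StrictMono (g ∘ (σ : Fin n → Fin n)) := by
      rw [hgσ]; exact fun a b hab => hv.2.1 a b hab
    have hsm2 : StrictMono (g ∘ (σ' : Fin n → Fin n)) := by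
      rw [hgσ']; exact fun a b hab => hv'.2.1 a b hab
    have hrange : Set.range (g ∘ (σ : Fin n → Fin n)) = Set.range (g ∘ (σ' : Fin n → Fin n)) := by
      rw [Set.range_comp, Set.range_comp, Equiv.range_eq_univ, Equiv.range_eq_univ]
    haveI : WellFoundedLT (Fin n) := inferInstance
    have hcomp := (StrictMono.range_inj hsm1 hsm2).1 hrange
    have ginj : Function.Injective g := by
      intro a b hab
      have := hv.1.injective hab
      exact Sum.inl_injective ((letterEquiv n r s m σ).symm.injective this)
    have hσ : σ = σ' := Equiv.ext fun i => ginj (congrFun hcomp i)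
    subst hσ
    have hvv : v = v' := by
      funext l
      have := congrFun heq (letterEquiv n r s m σ l)
      simpa using this
    subst hvv
    rfl
  have hsurj : Function.Surjective F := by
    rintro ⟨w, hw⟩
    have ginj : Function.Injective (fun i : Fin n => w (Sum.inl i)) := fun a b hab =>
      Sum.inl_injective (hw.1.injective hab)
    set σ : Equiv.Perm (Fin n) := Tuple.sort (fun i : Fin n => w (Sum.inl i)) with hσ
    have hsm : StrictMono ((fun i : Fin n => w (Sum.inl i)) ∘ (σ : Fin n → Fin n)) :=
      (Tuple.monotone_sort _).strictMono_of_injective (ginj.comp σ.injective)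
    have hv : IsSelbergPerm (w ∘ (letterEquiv n r s m σ : SLetter n r s m ≃ SLetter n r s m)) := by
      refine ⟨hw.1.comp (letterEquiv n r s m σ).bijective, ?_, ?_, ?_, ?_⟩
      · intro i j hij
        show w (Sum.inl (σ i)) < w (Sum.inl (σ j))
        exact hsm hij
      · rintro ⟨⟨i, j⟩, hij⟩ k
        show w (Sum.inl (σ i)) < w (Sum.inr (Sum.inl (pairMap σ ⟨(i, j), hij⟩, k))) ∧
          w (Sum.inr (Sum.inl (pairMap σ ⟨(i, j), hij⟩, k))) < w (Sum.inl (σ j))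
        by_cases h : σ i < σ j
        · have hq : pairMap σ ⟨(i, j), hij⟩ = ⟨(σ i, σ j), h⟩ := by simp [pairMap, h]
          rw [hq]
          rcases hw.2.1 ⟨(σ i, σ j), h⟩ k with hcase | hcase
          · exact hcase
          · exact absurd (lt_trans hcase.1 hcase.2) (lt_asymm (hsm hij))
        · have h2 : σ j < σ i := lt_of_le_of_ne (not_lt.mp h)
            (fun e => (ne_of_lt hij) ((σ.injective e).symm))
          have hq : pairMap σ ⟨(i, j), hij⟩ = ⟨(σ j, σ i), h2⟩ := by simp [pairMap, h]
          rw [hq]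
          rcases hw.2.1 ⟨(σ j, σ i), h2⟩ k with hcase | hcase
          · exact absurd (lt_trans hcase.1 hcase.2) (lt_asymm (hsm hij))
          · exact hcase
      · intro i k
        show w (Sum.inr (Sum.inr (Sum.inl (σ i, k)))) < w (Sum.inl (σ i))
        exact hw.2.2.1 (σ i) k
      · intro i k
        show w (Sum.inl (σ i)) < w (Sum.inr (Sum.inr (Sum.inr (σ i, k))))
        exact hw.2.2.2 (σ i) k
    refine ⟨(σ, ⟨w ∘ (letterEquiv n r s m σ), hv⟩), ?_⟩
    apply Subtype.ext
    funext l
    simp [hF]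
  calc Nat.card {w : SLetter n r s m → Fin (SN n r s m) // IsWeak w}
      = Nat.card (Equiv.Perm (Fin n) ×
          {v : SLetter n r s m → Fin (SN n r s m) // IsSelbergPerm v}) :=
        (Nat.card_eq_of_bijective F ⟨hinj, hsurj⟩).symm
    _ = Nat.card (Equiv.Perm (Fin n)) *
          Nat.card {v : SLetter n r s m → Fin (SN n r s m) // IsSelbergPerm v} :=
        Nat.card_prod _ _
    _ = n.factorial * SPnum n r s m := by
        rw [Nat.card_eq_fintype_card, Fintype.card_perm, Fintype.card_fin]
        rfl

end SelbergComb

namespace SelbergMain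
open SelbergComb SelbergAux

def cube (n : ℕ) : Set (Fin n → ℝ) := Set.univ.pi fun _ : Fin n => Set.Icc (0:ℝ) 1

lemma cube_meas (n : ℕ) : MeasurableSet (cube n) :=
  MeasurableSet.univ_pi fun _ => measurableSet_Icc

def J (n r s m : ℕ) (x : Fin n → ℝ) : SRest n r s m → Set ℝ := fun l => match l with
  | Sum.inl (p, _) => Set.Ioo (min (x p.1.1) (x p.1.2)) (max (x p.1.1) (x p.1.2))
  | Sum.inr (Sum.inl (i, _)) => Set.Ioo 0 (x i)
  | Sum.inr (Sum.inr (i, _)) => Set.Ioo (x i) 1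

def T (n r s m : ℕ) : Set ((Fin n → ℝ) × (SRest n r s m → ℝ)) :=
  {q | q.1 ∈ cube n ∧ ∀ l, q.2 l ∈ J n r s m q.1 l}

lemma T_meas (n r s m : ℕ) : MeasurableSet (T n r s m) := by
  have h1 : MeasurableSet {q : (Fin n → ℝ) × (SRest n r s m → ℝ) | q.1 ∈ cube n} :=
    (cube_meas n).preimage measurable_fst
  have h2 : MeasurableSet {q : (Fin n → ℝ) × (SRest n r s m → ℝ) |
      ∀ l, q.2 l ∈ J n r s m q.1 l} := by
    rw [Set.setOf_forall]
    refine MeasurableSet.iInter fun l => ?_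
    rcases l with ⟨p, k⟩ | ⟨i, k⟩ | ⟨i, k⟩
    · exact (measurableSet_lt (f := fun q : (Fin n → ℝ) × (SRest n r s m → ℝ) => min (q.1 p.1.1) (q.1 p.1.2)) (g := fun q : (Fin n → ℝ) × (SRest n r s m → ℝ) => q.2 (Sum.inl (p, k)))
        (by fun_prop) (by fun_prop)).inter
        (measurableSet_lt (f := fun q : (Fin n → ℝ) × (SRest n r s m → ℝ) => q.2 (Sum.inl (p, k))) (g := fun q : (Fin n → ℝ) × (SRest n r s m → ℝ) => max (q.1 p.1.1) (q.1 p.1.2))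
        (by fun_prop) (by fun_prop))
    · exact (measurableSet_lt (f := fun q : (Fin n → ℝ) × (SRest n r s m → ℝ) => (0:ℝ)) (g := fun q : (Fin n → ℝ) × (SRest n r s m → ℝ) => q.2 (Sum.inr (Sum.inl (i, k))))
        (by fun_prop) (by fun_prop)).inter
        (measurableSet_lt (f := fun q : (Fin n → ℝ) × (SRest n r s m → ℝ) => q.2 (Sum.inr (Sum.inl (i, k)))) (g := fun q : (Fin n → ℝ) × (SRest n r s m → ℝ) => q.1 i)
        (by fun_prop) (by fun_prop))
    · exact (measurableSet_lt (f := fun q : (Fin n → ℝ) × (SRest n r s m → ℝ) => q.1 i) (g := fun q : (Fin n → ℝ) × (SRest n r s m → ℝ) => q.2 (Sum.inr (Sum.inr (i, k))))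
        (by fun_prop) (by fun_prop)).inter
        (measurableSet_lt (f := fun q : (Fin n → ℝ) × (SRest n r s m → ℝ) => q.2 (Sum.inr (Sum.inr (i, k)))) (g := fun q : (Fin n → ℝ) × (SRest n r s m → ℝ) => (1:ℝ))
        (by fun_prop) (by fun_prop))
  exact h1.inter h2

lemma J_volume (n r s m : ℕ) (x : Fin n → ℝ) (hx : x ∈ cube n) :
    volume (Set.univ.pi (J n r s m x))
      = ENNReal.ofReal ((∏ i, x i ^ r * (1 - x i) ^ s) *
          ∏ p ∈ Finset.univ.filter (fun p : Fin n × Fin n => p.1 < p.2),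
            |x p.1 - x p.2| ^ m) := by
  classical
  have hx' : ∀ i, 0 ≤ x i ∧ x i ≤ 1 := fun i => Set.mem_univ_pi.mp hx i
  have h0 : ∀ i : Fin n, (0:ℝ) ≤ x i := fun i => (hx' i).1
  have h1 : ∀ i : Fin n, (0:ℝ) ≤ 1 - x i := fun i => sub_nonneg.2 (hx' i).2
  rw [volume_pi_pi, Fintype.prod_sum_type, Fintype.prod_sum_type]
  have hA : ∀ pk : SPairs n × Fin m,
      volume (J n r s m x (Sum.inl pk)) = ENNReal.ofReal |x pk.1.1.1 - x pk.1.1.2| := by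
    rintro ⟨p, k⟩
    show volume (Set.Ioo (min (x p.1.1) (x p.1.2)) (max (x p.1.1) (x p.1.2))) = _
    rw [Real.volume_Ioo]
    congr 1
    rw [max_sub_min_eq_abs, abs_sub_comm]
  have hB : ∀ ik : Fin n × Fin r,
      volume (J n r s m x (Sum.inr (Sum.inl ik))) = ENNReal.ofReal (x ik.1) := by
    rintro ⟨i, k⟩
    show volume (Set.Ioo 0 (x i)) = _
    rw [Real.volume_Ioo, sub_zero]
  have hC : ∀ ik : Fin n × Fin s,
      volume (J n r s m x (Sum.inr (Sum.inr ik))) = ENNReal.ofReal (1 - x ik.1) := by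
    rintro ⟨i, k⟩
    show volume (Set.Ioo (x i) 1) = _
    rw [Real.volume_Ioo]
  have PA : (∏ pk : SPairs n × Fin m, volume (J n r s m x (Sum.inl pk)))
      = ∏ p : SPairs n, ENNReal.ofReal (|x p.1.1 - x p.1.2| ^ m) := by
    rw [Finset.prod_congr rfl (fun pk _ => hA pk), Fintype.prod_prod_type]
    refine Finset.prod_congr rfl fun p _ => ?_
    simp only [Finset.prod_const, Finset.card_univ, Fintype.card_fin]
    rw [ENNReal.ofReal_pow (abs_nonneg _)]
  have PB : (∏ ik : Fin n × Fin r, volume (J n r s m x (Sum.inr (Sum.inl ik))))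
      = ∏ i, ENNReal.ofReal (x i ^ r) := by
    rw [Finset.prod_congr rfl (fun ik _ => hB ik), Fintype.prod_prod_type]
    refine Finset.prod_congr rfl fun i _ => ?_
    simp only [Finset.prod_const, Finset.card_univ, Fintype.card_fin]
    rw [ENNReal.ofReal_pow (h0 i)]
  have PC : (∏ ik : Fin n × Fin s, volume (J n r s m x (Sum.inr (Sum.inr ik))))
      = ∏ i, ENNReal.ofReal ((1 - x i) ^ s) := by
    rw [Finset.prod_congr rfl (fun ik _ => hC ik), Fintype.prod_prod_type]
    refine Finset.prod_congr rfl fun i _ => ?_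
    simp only [Finset.prod_const, Finset.card_univ, Fintype.card_fin]
    rw [ENNReal.ofReal_pow (h1 i)]
  rw [PA, PB, PC]
  have hAnn : (0:ℝ) ≤ ∏ i, x i ^ r * (1 - x i) ^ s :=
    Finset.prod_nonneg fun i _ => mul_nonneg (pow_nonneg (h0 i) r) (pow_nonneg (h1 i) s)
  rw [ENNReal.ofReal_mul hAnn,
    ENNReal.ofReal_prod_of_nonneg
      (fun i _ => mul_nonneg (pow_nonneg (h0 i) r) (pow_nonneg (h1 i) s)),
    ENNReal.ofReal_prod_of_nonneg
      (fun p _ => pow_nonneg (abs_nonneg (x p.1 - x p.2)) m)]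
  rw [Finset.prod_congr rfl
    (fun i (_ : i ∈ Finset.univ) => ENNReal.ofReal_mul (pow_nonneg (h0 i) r))]
  rw [Finset.prod_mul_distrib]
  rw [Finset.prod_subtype (p := fun q : Fin n × Fin n => q.1 < q.2)
    (Finset.univ.filter (fun q : Fin n × Fin n => q.1 < q.2))
    (fun q => by simp) (fun q => ENNReal.ofReal (|x q.1 - x q.2| ^ m))]
  ring

end SelbergMain

namespace SelbergMain
open SelbergComb SelbergAux

def R (n r s m : ℕ) (w : SLetter n r s m → Fin (SN n r s m)) : Set (SLetter n r s m → ℝ) :=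
  {t | (∀ l, t l ∈ Set.Icc (0:ℝ) 1) ∧ ∀ l l', w l < w l' → t l < t l'}

lemma volume_R {n r s m : ℕ} {w : SLetter n r s m → Fin (SN n r s m)}
    (hw : Function.Bijective w) :
    volume (R n r s m w) = ((SN n r s m).factorial : ℝ≥0∞)⁻¹ := by
  have := volume_region (Equiv.ofBijective w hw)
  convert this using 2
  rfl

lemma volume_preimage_T (n r s m : ℕ) :
    volume ((MeasurableEquiv.sumPiEquivProdPi (fun _ : SLetter n r s m => ℝ)) ⁻¹' T n r s m)
      = (Nat.card {w : SLetter n r s m → Fin (SN n r s m) // IsWeak w} : ℝ≥0∞)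
          * ((SN n r s m).factorial : ℝ≥0∞)⁻¹ := by
  classical
  set E := MeasurableEquiv.sumPiEquivProdPi (fun _ : SLetter n r s m => ℝ) with hE
  have hEapp : ∀ (t : SLetter n r s m → ℝ),
      (E t : (Fin n → ℝ) × (SRest n r s m → ℝ))
        = (fun i => t (Sum.inl i), fun l => t (Sum.inr l)) := fun t => rfl
  set Bad : Set (SLetter n r s m → ℝ) :=
    (⋃ (l) (l') (_ : l ≠ l'), {t | t l = t l'}) ∪
      ((⋃ l, {t | t l = (0:ℝ)}) ∪ (⋃ l, {t | t l = (1:ℝ)})) with hBadDef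
  have hBad : volume Bad = 0 := by
    refine measure_union_null ?_ (measure_union_null ?_ ?_)
    · exact measure_iUnion_null fun l => measure_iUnion_null fun l' =>
        measure_iUnion_null fun h => volume_eq_coords h
    · refine measure_iUnion_null fun l => ?_
      rw [volume_pi]
      exact Measure.pi_hyperplane _ l 0
    · refine measure_iUnion_null fun l => ?_
      rw [volume_pi]
      exact Measure.pi_hyperplane _ l 1
  have hchar : ∀ t ∉ Bad, (t ∈ E ⁻¹' T n r s m ↔
      t ∈ ⋃ (w : {w : SLetter n r s m → Fin (SN n r s m) // IsWeak w}), R n r s m w.1) := by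
    intro t htB
    have hBad1 : ∀ l l', l ≠ l' → t l ≠ t l' := by
      intro l l' hne he
      exact htB (Or.inl (Set.mem_iUnion.2 ⟨l, Set.mem_iUnion.2 ⟨l', Set.mem_iUnion.2 ⟨hne, he⟩⟩⟩))
    have hBad2 : ∀ l, t l ≠ 0 := fun l he =>
      htB (Or.inr (Or.inl (Set.mem_iUnion.2 ⟨l, he⟩)))
    have hBad3 : ∀ l, t l ≠ 1 := fun l he =>
      htB (Or.inr (Or.inr (Set.mem_iUnion.2 ⟨l, he⟩)))
    constructor
    · intro htS
      have hcube : (fun i => t (Sum.inl i)) ∈ cube n := htS.1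
      have hcx : ∀ i, t (Sum.inl i) ∈ Set.Icc (0:ℝ) 1 := Set.mem_univ_pi.mp hcube
      have hJ : ∀ l, t (Sum.inr l) ∈ J n r s m (fun i => t (Sum.inl i)) l := htS.2
      have tinj : Function.Injective t := by
        intro a b hab
        by_contra hne
        exact hBad1 a b hne hab
      set c0 : SLetter n r s m ≃ Fin (SN n r s m) :=
        Fintype.equivFinOfCardEq (card_sLetter n r s m) with hc0
      set u : Fin (SN n r s m) → ℝ := t ∘ c0.symm with hu
      set σ := Tuple.sort u with hσ
      have husm : StrictMono (u ∘ (σ : Fin (SN n r s m) → Fin (SN n r s m))) :=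
        (Tuple.monotone_sort u).strictMono_of_injective
          ((tinj.comp c0.symm.injective).comp σ.injective)
      set w : SLetter n r s m → Fin (SN n r s m) := fun l => σ.symm (c0 l) with hw
      have hwt : ∀ l, (u ∘ (σ : Fin (SN n r s m) → Fin (SN n r s m))) (w l) = t l := by
        intro l
        simp [hw, hu]
      have hiff : ∀ l l', (w l < w l' ↔ t l < t l') := by
        intro l l'
        rw [← hwt l, ← hwt l']
        exact husm.lt_iff_lt.symm
      have hwbij : Function.Bijective w := (c0.trans σ.symm).bijective
      have hweak : IsWeak w := by
        refine ⟨hwbij, ?_, ?_, ?_⟩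
        · intro p k
          have hmem := hJ (Sum.inl (p, k))
          have hne : t (Sum.inl p.1.1) ≠ t (Sum.inl p.1.2) := by
            apply hBad1
            intro he
            exact (ne_of_lt p.2) (Sum.inl_injective he)
          rcases lt_or_gt_of_ne hne with hlt | hgt
          · left
            rw [show J n r s m (fun i => t (Sum.inl i)) (Sum.inl (p, k))
                = Set.Ioo (min (t (Sum.inl p.1.1)) (t (Sum.inl p.1.2)))
                    (max (t (Sum.inl p.1.1)) (t (Sum.inl p.1.2))) from rfl,
              min_eq_left hlt.le, max_eq_right hlt.le] at hmem
            exact ⟨(hiff _ _).2 hmem.1, (hiff _ _).2 hmem.2⟩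
          · right
            rw [show J n r s m (fun i => t (Sum.inl i)) (Sum.inl (p, k))
                = Set.Ioo (min (t (Sum.inl p.1.1)) (t (Sum.inl p.1.2)))
                    (max (t (Sum.inl p.1.1)) (t (Sum.inl p.1.2))) from rfl,
              min_eq_right hgt.le, max_eq_left hgt.le] at hmem
            exact ⟨(hiff _ _).2 hmem.1, (hiff _ _).2 hmem.2⟩
        · intro i k
          have hmem := hJ (Sum.inr (Sum.inl (i, k)))
          exact (hiff _ _).2 hmem.2
        · intro i k
          have hmem := hJ (Sum.inr (Sum.inr (i, k)))
          exact (hiff _ _).2 hmem.1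
      refine Set.mem_iUnion.2 ⟨⟨w, hweak⟩, ⟨?_, fun l l' h => (hiff l l').1 h⟩⟩
      intro l
      rcases l with i | l'
      · exact hcx i
      · have hmem := hJ l'
        rcases l' with ⟨p, k⟩ | ⟨i, k⟩ | ⟨i, k⟩
        · refine ⟨le_trans (le_min (hcx p.1.1).1 (hcx p.1.2).1) hmem.1.le,
            le_trans hmem.2.le (max_le (hcx p.1.1).2 (hcx p.1.2).2)⟩
        · exact ⟨hmem.1.le, hmem.2.le.trans (hcx i).2⟩
        · exact ⟨(hcx i).1.trans hmem.1.le, hmem.2.le⟩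
    · intro htU
      obtain ⟨⟨w, hw⟩, htR⟩ := Set.mem_iUnion.1 htU
      obtain ⟨hcube', hord⟩ := htR
      refine ⟨Set.mem_univ_pi.2 fun i => hcube' (Sum.inl i), ?_⟩
      intro l
      rcases l with ⟨p, k⟩ | ⟨i, k⟩ | ⟨i, k⟩
      · rcases hw.2.1 p k with hcase | hcase
        · exact ⟨lt_of_le_of_lt (min_le_left _ _) (hord _ _ hcase.1),
            lt_of_lt_of_le (hord _ _ hcase.2) (le_max_right _ _)⟩
        · exact ⟨lt_of_le_of_lt (min_le_right _ _) (hord _ _ hcase.1),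
            lt_of_lt_of_le (hord _ _ hcase.2) (le_max_left _ _)⟩
      · exact ⟨lt_of_le_of_ne (hcube' _).1 (Ne.symm (hBad2 _)), hord _ _ (hw.2.2.1 i k)⟩
      · exact ⟨hord _ _ (hw.2.2.2 i k), lt_of_le_of_ne (hcube' _).2 (hBad3 _)⟩
  -- disjointness of the regions
  haveI : WellFoundedLT (Fin (SN n r s m)) := inferInstance
  have hdisj : Pairwise (Function.onFun Disjoint
      (fun w : {w : SLetter n r s m → Fin (SN n r s m) // IsWeak w} => R n r s m w.1)) := by
    rintro ⟨w, hw⟩ ⟨w', hw'⟩ hne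
    rw [Function.onFun, Set.disjoint_left]
    rintro t ⟨hc, ho⟩ ⟨hc', ho'⟩
    apply hne
    refine Subtype.ext ?_
    set e := Equiv.ofBijective w hw.1 with he
    have hsm : StrictMono (fun a => w' (e.symm a)) := by
      intro a b hab
      have h1 : t (e.symm a) < t (e.symm b) := by
        apply ho
        show w (e.symm a) < w (e.symm b)
        have ha := e.apply_symm_apply a
        have hb := e.apply_symm_apply b
        rw [show w (e.symm a) = e (e.symm a) from rfl, show w (e.symm b) = e (e.symm b) from rfl,
          ha, hb]
        exact hab
      rcases lt_trichotomy (w' (e.symm a)) (w' (e.symm b)) with h | h | h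
      · exact h
      · exfalso
        have := hw'.1.injective h
        rw [this] at h1
        exact lt_irrefl _ h1
      · exfalso
        exact absurd (ho' _ _ h) (not_lt.2 h1.le)
    have hr : Set.range (fun a => w' (e.symm a))
        = Set.range (fun a : Fin (SN n r s m) => a) := by
      have hsurj : Function.Surjective (fun a => w' (e.symm a)) :=
        hw'.1.surjective.comp e.symm.surjective
      rw [hsurj.range_eq, Set.range_id']
    have hww := (StrictMono.range_inj hsm strictMono_id).1 hr
    funext l
    have h2 := congrFun hww (e l)
    simpa [he] using h2.symm
  have hmeasR : ∀ w : {w : SLetter n r s m → Fin (SN n r s m) // IsWeak w},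
      MeasurableSet (R n r s m w.1) := fun w => measurableSet_region w.1
  have hU : volume (⋃ (w : {w : SLetter n r s m → Fin (SN n r s m) // IsWeak w}),
      R n r s m w.1) = (Nat.card {w : SLetter n r s m → Fin (SN n r s m) // IsWeak w} : ℝ≥0∞)
        * ((SN n r s m).factorial : ℝ≥0∞)⁻¹ := by
    rw [measure_iUnion hdisj hmeasR, tsum_fintype]
    rw [Finset.sum_congr rfl (fun w _ => volume_R w.2.1)]
    rw [Finset.sum_const, Finset.card_univ, nsmul_eq_mul, Nat.card_eq_fintype_card]
  have hfinal : volume (E ⁻¹' T n r s m)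
      = volume (⋃ (w : {w : SLetter n r s m → Fin (SN n r s m) // IsWeak w}), R n r s m w.1) := by
    rw [← measure_diff_null (t := Bad) hBad, ← measure_diff_null (s := ⋃ _, _) (t := Bad) hBad]
    congr 1
    ext t
    simp only [Set.mem_diff]
    constructor
    · rintro ⟨h1, h2⟩
      exact ⟨(hchar t h2).1 h1, h2⟩
    · rintro ⟨h1, h2⟩
      exact ⟨(hchar t h2).2 h1, h2⟩
  rw [hfinal, hU]

end SelbergMain


open SelbergAux SelbergComb SelbergMain

theorem selberg_integral_eq_selberg_permutations (n r s m : ℕ) (hn : 1 ≤ n) :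
    (∫ x in Set.univ.pi (fun _ : Fin n => Set.Icc (0 : ℝ) 1),
      (∏ i, x i ^ r * (1 - x i) ^ s) *
        ∏ p ∈ Finset.univ.filter (fun p : Fin n × Fin n => p.1 < p.2), |x p.1 - x p.2| ^ m)
    = (n.factorial * SPnum n r s m : ℝ) /
        ((r + s + 1) * n + m * (n * (n - 1) / 2)).factorial := by
  classical
  set f : (Fin n → ℝ) → ℝ := fun x => (∏ i, x i ^ r * (1 - x i) ^ s) *
    ∏ p ∈ Finset.univ.filter (fun p : Fin n × Fin n => p.1 < p.2), |x p.1 - x p.2| ^ m with hf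
  have hfc : Continuous f :=
    (continuous_finset_prod _ fun i _ =>
      ((continuous_apply i).pow r).mul ((continuous_const.sub (continuous_apply i)).pow s)).mul
      (continuous_finset_prod _ fun p _ =>
        (((continuous_apply p.1).sub (continuous_apply p.2)).abs.pow m))
  have hnn : 0 ≤ᵐ[volume.restrict (cube n)] f := by
    refine (ae_restrict_iff' (cube_meas n)).2 (ae_of_all _ fun x hx => ?_)
    have hx' := Set.mem_univ_pi.mp hx
    exact mul_nonneg (Finset.prod_nonneg fun i _ => mul_nonneg
      (pow_nonneg (hx' i).1 r) (pow_nonneg (sub_nonneg.2 (hx' i).2) s))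
      (Finset.prod_nonneg fun p _ => pow_nonneg (abs_nonneg _) m)
  have step1 : (∫ x in cube n, f x)
      = (∫⁻ x in cube n, ENNReal.ofReal (f x)).toReal :=
    integral_eq_lintegral_of_nonneg_ae hnn hfc.measurable.aestronglyMeasurable
  have step2 : ∫⁻ x in cube n, ENNReal.ofReal (f x)
      = ∫⁻ x in cube n, volume (Set.univ.pi (J n r s m x)) :=
    setLIntegral_congr_fun (cube_meas n)
      (fun x hx => (J_volume n r s m x hx).symm)
  have step3 : ∫⁻ x in cube n, volume (Set.univ.pi (J n r s m x))
      = ((volume : Measure (Fin n → ℝ)).prod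
          (volume : Measure (SRest n r s m → ℝ))) (T n r s m) := by
    rw [Measure.prod_apply (T_meas n r s m)]
    rw [← lintegral_indicator (cube_meas n)]
    refine lintegral_congr fun x => ?_
    by_cases hx : x ∈ cube n
    · rw [Set.indicator_of_mem hx]
      congr 1
      ext y
      simp only [Set.mem_preimage, T, Set.mem_setOf_eq, Set.mem_univ_pi]
      exact ⟨fun hy => ⟨hx, hy⟩, fun hy => hy.2⟩
    · rw [Set.indicator_of_notMem hx]
      have : Prod.mk x ⁻¹' T n r s m = ∅ := by
        ext y
        simp only [Set.mem_preimage, T, Set.mem_setOf_eq, Set.mem_empty_iff_false, iff_false]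
        exact fun hy => hx hy.1
      rw [this]
      simp
  have step4 : ((volume : Measure (Fin n → ℝ)).prod
        (volume : Measure (SRest n r s m → ℝ))) (T n r s m)
      = volume ((MeasurableEquiv.sumPiEquivProdPi (fun _ : SLetter n r s m => ℝ))
          ⁻¹' T n r s m) := by
    rw [(volume_measurePreserving_sumPiEquivProdPi
      (fun _ : SLetter n r s m => ℝ)).measure_preimage (T_meas n r s m).nullMeasurableSet]
    rw [Measure.volume_eq_prod]
  have step5 := volume_preimage_T n r s m
  have hcount := card_weak n r s m
  show (∫ x in cube n, f x) = _
  rw [step1, step2, step3, step4, step5, hcount]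
  have hN0 : ((SN n r s m).factorial : ℝ≥0∞) ≠ 0 :=
    Nat.cast_ne_zero.2 (Nat.factorial_ne_zero _)
  have hNt : ((SN n r s m).factorial : ℝ≥0∞) ≠ ⊤ := ENNReal.natCast_ne_top _
  rw [ENNReal.toReal_mul, ENNReal.toReal_inv]
  simp only [ENNReal.toReal_natCast]
  rw [div_eq_mul_inv]
  norm_num
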